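/- Let n ≥ 1 and let F_n be the free group on generators a_1, …, a_n (e.g. FreeGroup (Fin n)). Call two elements g, h ∈ F_n adjacent if g⁻¹h equals some a_i or a_i⁻¹. Let K ⊆ F_n be a finite nonempty set that is connected, i.e. for any x, y ∈ K there is a finite sequence of elements of K starting at x and ending at y in which consecutive elements are adjacent. Then K is a right tile of F_n: there exists C ⊆ F_n such that the left translates cK, c ∈ C, are pairwise disjoint and their union is F_n. -/

import Mathlib

/-- Two elements of the free group are adjacent in the Cayley graph (standard generators)
if `g⁻¹ * h` is a generator or an inverse of a generator. -/
def FreeGroupAdj (n : ℕ) (g h : FreeGroup (Fin n)) : Prop :=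
  ∃ i : Fin n, g⁻¹ * h = FreeGroup.of i ∨ g⁻¹ * h = (FreeGroup.of i)⁻¹

/-- A set `K` is connected if any two of its elements are joined by a path inside `K`. -/
def FreeGroupConnected (n : ℕ) (K : Set (FreeGroup (Fin n))) : Prop :=
  ∀ x ∈ K, ∀ y ∈ K, ∃ l : List (FreeGroup (Fin n)),
    l.Chain' (FreeGroupAdj n) ∧ l.head? = some x ∧ l.getLast? = some y ∧ ∀ z ∈ l, z ∈ K

/-- Auxiliary: the partial injection `y ↦ y * (of i)⁻¹` on a finite subset of the free group
extends to a permutation of the subset. -/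
lemma exists_tile_sigma (n : ℕ) (K' : Finset (FreeGroup (Fin n))) (i : Fin n) :
    ∃ σ : Equiv.Perm {x : FreeGroup (Fin n) // x ∈ K'},
      ∀ (x : {x : FreeGroup (Fin n) // x ∈ K'}) (h : x.val * (FreeGroup.of i)⁻¹ ∈ K'),
        (σ x : FreeGroup (Fin n)) = x.val * (FreeGroup.of i)⁻¹ := by
  classical
  set X := {x : FreeGroup (Fin n) // x ∈ K'} with hX
  set p : X → Prop := fun x => x.val * (FreeGroup.of i)⁻¹ ∈ K' with hp
  set q : X → Prop := fun x => x.val * (FreeGroup.of i) ∈ K' with hq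
  let e1 : {x : X // p x} ≃ {x : X // q x} :=
  { toFun := fun x => ⟨⟨x.val.val * (FreeGroup.of i)⁻¹, x.prop⟩, by
      simp only [hq]; simpa using x.val.prop⟩
    invFun := fun x => ⟨⟨x.val.val * (FreeGroup.of i), x.prop⟩, by
      simp only [hp]; simpa using x.val.prop⟩
    left_inv := fun x => by
      apply Subtype.ext; apply Subtype.ext; simp
    right_inv := fun x => by
      apply Subtype.ext; apply Subtype.ext; simp }
  have hcard : Fintype.card {x : X // ¬ p x} = Fintype.card {x : X // ¬ q x} := by
    rw [Fintype.card_subtype_compl, Fintype.card_subtype_compl, Fintype.card_congr e1]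
  refine ⟨Equiv.subtypeCongr e1 (Fintype.equivOfCardEq hcard), ?_⟩
  intro x h
  have hpx : p x := h
  simp only [Equiv.subtypeCongr, Equiv.trans_apply,
    Equiv.sumCompl_symm_apply_of_pos hpx, Equiv.sumCongr_apply, Sum.map_inl,
    Equiv.sumCompl_apply_inl]
  rfl

/- STATEMENT 11: Every finite nonempty connected subset of the free group `F_n` (`n ≥ 1`)
is a right tile: some family of left translates `c * K`, `c ∈ C`, partitions `F_n`. -/
theorem stmt_11 (n : ℕ) (hn : 1 ≤ n) (K : Finset (FreeGroup (Fin n))) (hne : K.Nonempty)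
    (hconn : FreeGroupConnected n (K : Set (FreeGroup (Fin n)))) :
    ∃ C : Set (FreeGroup (Fin n)),
      (C.PairwiseDisjoint fun c => (fun s => c * s) '' (K : Set (FreeGroup (Fin n)))) ∧
      ⋃ c ∈ C, (fun s => c * s) '' (K : Set (FreeGroup (Fin n))) = Set.univ := by
  classical
  obtain ⟨x0, hx0⟩ := hne
  set K' : Finset (FreeGroup (Fin n)) := K.image (fun y => x0⁻¹ * y) with hK'
  have h1K' : (1 : FreeGroup (Fin n)) ∈ K' :=
    Finset.mem_image.2 ⟨x0, hx0, by group⟩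
  have hmemK' : ∀ y ∈ K, x0⁻¹ * y ∈ K' := fun y hy => Finset.mem_image.2 ⟨y, hy, rfl⟩
  choose σ hσ using fun i => exists_tile_sigma n K' i
  set φ : FreeGroup (Fin n) →* Equiv.Perm {x : FreeGroup (Fin n) // x ∈ K'} :=
    FreeGroup.lift σ with hφ
  have hφof : ∀ j : Fin n, φ (FreeGroup.of j) = σ j := fun j => FreeGroup.lift_apply_of
  set p0 : {x : FreeGroup (Fin n) // x ∈ K'} := ⟨1, h1K'⟩ with hp0
  set ψ : FreeGroup (Fin n) → {x : FreeGroup (Fin n) // x ∈ K'} :=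
    fun g => φ g⁻¹ p0 with hψ
  -- the inverse permutation realizes right multiplication by `of i`
  have hσinv : ∀ (i : Fin n) (x : {x : FreeGroup (Fin n) // x ∈ K'})
      (h : x.val * FreeGroup.of i ∈ K'),
      ((σ i)⁻¹ x : FreeGroup (Fin n)) = x.val * FreeGroup.of i := by
    intro i x h
    have key : σ i ⟨x.val * FreeGroup.of i, h⟩ = x := by
      apply Subtype.ext
      rw [hσ i ⟨_, h⟩ (by simpa using x.prop)]
      simp
    have h2 : (σ i)⁻¹ x = ⟨x.val * FreeGroup.of i, h⟩ :=
      Equiv.Perm.inv_eq_iff_eq.2 key.symm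
    rw [h2]
  set Q : FreeGroup (Fin n) → Prop :=
    fun y => ((ψ (x0⁻¹ * y)) : FreeGroup (Fin n)) = x0⁻¹ * y with hQ
  have hQx0 : Q x0 := by
    simp only [hQ, hψ, inv_mul_cancel, inv_one, map_one, Equiv.Perm.coe_one, id_eq, hp0]
  -- a single adjacency step
  have step : ∀ a b : FreeGroup (Fin n), FreeGroupAdj n a b → a ∈ K → b ∈ K → Q a → Q b := by
    intro a b hadj ha hb hQa
    have hψa : ψ (x0⁻¹ * a) = ⟨x0⁻¹ * a, hmemK' a ha⟩ := Subtype.ext hQa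
    obtain ⟨i, hi | hi⟩ := hadj
    · -- b = a * of i
      have hmul : (x0⁻¹ * b)⁻¹ = (FreeGroup.of i)⁻¹ * (x0⁻¹ * a)⁻¹ := by
        rw [← hi]; group
      have hK'b : (x0⁻¹ * a) * FreeGroup.of i ∈ K' := by
        have hab : x0⁻¹ * a * FreeGroup.of i = x0⁻¹ * b := by rw [← hi]; group
        rw [hab]; exact hmemK' b hb
      have hstep1 : ψ (x0⁻¹ * b) = (σ i)⁻¹ (ψ (x0⁻¹ * a)) := by
        show φ (x0⁻¹ * b)⁻¹ p0 = (σ i)⁻¹ (φ (x0⁻¹ * a)⁻¹ p0)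
        rw [hmul, map_mul, Equiv.Perm.mul_apply,
          show φ (FreeGroup.of i)⁻¹ = (σ i)⁻¹ by rw [map_inv, hφof]]
      show ((ψ (x0⁻¹ * b)) : FreeGroup (Fin n)) = x0⁻¹ * b
      rw [hstep1, hψa, hσinv i ⟨x0⁻¹ * a, hmemK' a ha⟩ hK'b]
      show x0⁻¹ * a * FreeGroup.of i = x0⁻¹ * b
      rw [← hi]; group
    · -- b = a * (of i)⁻¹
      have hmul : (x0⁻¹ * b)⁻¹ = FreeGroup.of i * (x0⁻¹ * a)⁻¹ := by
        have h0 : FreeGroup.of i = (a⁻¹ * b)⁻¹ := by rw [hi]; group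
        rw [h0]; group
      have hK'b : (x0⁻¹ * a) * (FreeGroup.of i)⁻¹ ∈ K' := by
        have hab : x0⁻¹ * a * (FreeGroup.of i)⁻¹ = x0⁻¹ * b := by rw [← hi]; group
        rw [hab]; exact hmemK' b hb
      have hstep1 : ψ (x0⁻¹ * b) = (σ i) (ψ (x0⁻¹ * a)) := by
        show φ (x0⁻¹ * b)⁻¹ p0 = (σ i) (φ (x0⁻¹ * a)⁻¹ p0)
        rw [hmul, map_mul, Equiv.Perm.mul_apply, hφof]
      show ((ψ (x0⁻¹ * b)) : FreeGroup (Fin n)) = x0⁻¹ * b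
      rw [hstep1, hψa, hσ i ⟨x0⁻¹ * a, hmemK' a ha⟩ hK'b]
      show x0⁻¹ * a * (FreeGroup.of i)⁻¹ = x0⁻¹ * b
      rw [← hi]; group
  -- propagate along chains
  have chain : ∀ (l : List (FreeGroup (Fin n))), l.Chain' (FreeGroupAdj n) →
      (∀ z ∈ l, z ∈ K) → ∀ a b, l.head? = some a → l.getLast? = some b → Q a → Q b := by
    intro l
    induction l with
    | nil => intro _ _ a b h; simp at h
    | cons c t ih =>
      intro hch hmem a b hh hl hQa
      rw [List.head?_cons, Option.some_inj] at hh
      subst hh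
      cases t with
      | nil =>
        simp only [List.getLast?_singleton, Option.some_inj] at hl
        subst hl; exact hQa
      | cons d t' =>
        unfold List.Chain' at hch
        rw [List.isChain_cons_cons] at hch
        rw [List.getLast?_cons_cons] at hl
        exact ih hch.2 (fun z hz => hmem z (List.mem_cons_of_mem _ hz)) d b rfl hl
          (step c d hch.1 (hmem c List.mem_cons_self)
            (hmem d (List.mem_cons_of_mem _ List.mem_cons_self)) hQa)
  have key : ∀ y ∈ K, Q y := by
    intro y hy
    obtain ⟨l, hch, hh, hl, hKl⟩ := hconn x0 (by exact_mod_cast hx0) y (by exact_mod_cast hy)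
    exact chain l hch (fun z hz => by exact_mod_cast hKl z hz) x0 y hh hl hQx0
  -- the tiling set
  set C : Set (FreeGroup (Fin n)) := {c | ψ (c * x0) = p0} with hC
  -- value of ψ on c * k for c ∈ C, k ∈ K
  have hval : ∀ c ∈ C, ∀ k ∈ K, ((ψ (c * k)) : FreeGroup (Fin n)) = x0⁻¹ * k := by
    intro c hc k hk
    have hmul : (c * k)⁻¹ = (x0⁻¹ * k)⁻¹ * (c * x0)⁻¹ := by group
    have e2 : ψ (c * k) = ψ (x0⁻¹ * k) := by
      show φ (c * k)⁻¹ p0 = φ (x0⁻¹ * k)⁻¹ p0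
      rw [hmul, map_mul, Equiv.Perm.mul_apply,
        show φ (c * x0)⁻¹ p0 = p0 from hc]
    rw [e2]
    exact key k hk
  refine ⟨C, ?_, ?_⟩
  · -- pairwise disjoint
    intro c hc c' hc' hcc'
    simp only [Function.onFun]
    rw [Set.disjoint_left]
    rintro g ⟨k, hk, rfl⟩ ⟨k', hk', heq⟩
    simp only at heq
    have h1 : ((ψ (c * k)) : FreeGroup (Fin n)) = x0⁻¹ * k := hval c hc k (by exact_mod_cast hk)
    have h2 : ((ψ (c' * k')) : FreeGroup (Fin n)) = x0⁻¹ * k' :=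
      hval c' hc' k' (by exact_mod_cast hk')
    rw [heq] at h2
    rw [h1] at h2
    have hkk' : k = k' := mul_left_cancel h2
    apply hcc'
    rw [hkk'] at heq
    exact (mul_right_cancel heq).symm
  · -- covering
    rw [Set.eq_univ_iff_forall]
    intro h
    obtain ⟨k, hk, hkval⟩ := Finset.mem_image.1 (ψ h).prop
    refine Set.mem_iUnion₂.2 ⟨h * k⁻¹, ?_, k, by exact_mod_cast hk, by group⟩
    show ψ (h * k⁻¹ * x0) = p0
    have hψh : ψ h = ⟨x0⁻¹ * k, hmemK' k hk⟩ := Subtype.ext hkval.symm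
    have hQk : ψ (x0⁻¹ * k) = ⟨x0⁻¹ * k, hmemK' k hk⟩ := Subtype.ext (key k hk)
    have hfix : φ (x0⁻¹ * k) (ψ (x0⁻¹ * k)) = p0 := by
      show φ (x0⁻¹ * k) (φ (x0⁻¹ * k)⁻¹ p0) = p0
      rw [← Equiv.Perm.mul_apply, ← map_mul, mul_inv_cancel, map_one]
      rfl
    have hmul : (h * k⁻¹ * x0)⁻¹ = (x0⁻¹ * k) * h⁻¹ := by group
    have e1 : ψ (h * k⁻¹ * x0) = φ (x0⁻¹ * k) (ψ h) := by
      show φ (h * k⁻¹ * x0)⁻¹ p0 = φ (x0⁻¹ * k) (φ h⁻¹ p0)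
      rw [hmul, map_mul, Equiv.Perm.mul_apply]
    rw [e1, hψh, ← hQk, hfix]
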